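/- arXiv:1810.12381 — 3 statements merged into one kernel-verified Lean document; each statement's English description precedes it below -/
import Mathlib

section
/- Let I ⊆ [0,∞) be a set satisfying the descending chain condition. Then the set D(I) satisfies the descending chain condition. -/
open Filter

/-- A set of reals satisfies the descending chain condition (DCC) if it contains
no infinite strictly decreasing sequence. -/
def DCC (S : Set ℝ) : Prop := ¬ ∃ f : ℕ → ℝ, StrictAnti f ∧ ∀ n, f n ∈ S

/-- A set of reals satisfies the ascending chain condition (ACC) if it contains
no infinite strictly increasing sequence. -/
def ACC (S : Set ℝ) : Prop := ¬ ∃ f : ℕ → ℝ, StrictMono f ∧ ∀ n, f n ∈ S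

/-- `x` is an accumulation point of `S` if every neighborhood of `x` contains a
point of `S` different from `x`. -/
def IsAccPt (x : ℝ) (S : Set ℝ) : Prop := ∀ ε > 0, ∃ y ∈ S, y ≠ x ∧ |y - x| < ε

/-- The set `∂S` of accumulation points of `S` in `ℝ`. -/
def accPts (S : Set ℝ) : Set ℝ := {x | IsAccPt x S}

/-- The set of all (nonempty) finite sums of elements of `I`. -/
def finSums (I : Set ℝ) : Set ℝ :=
  {x | ∃ l : ℕ, 0 < l ∧ ∃ g : Fin l → ℝ, (∀ p, g p ∈ I) ∧ x = ∑ p, g p}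

/-- `I₊ = {0} ∪ { x ∈ [0,1] : x is a nonempty finite sum of elements of I }`. -/
def plusSet (I : Set ℝ) : Set ℝ := {0} ∪ (Set.Icc 0 1 ∩ finSums I)

/-- `D(I) = { a ≤ 1 : a = (m - 1 + f)/m, m ∈ ℕ⁺, f ∈ I₊ }`. -/
def DSet (I : Set ℝ) : Set ℝ :=
  {a | a ≤ 1 ∧ ∃ m : ℕ, 0 < m ∧ ∃ f ∈ plusSet I, a = ((m : ℝ) - 1 + f) / m}

/-- `𝒟_c(I;J) = { a ≤ 1 : a = (m - 1 + f + kc)/m, m ∈ ℕ⁺, f ∈ I₊,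
k a nonzero finite sum of elements of J }`. -/
def DcSet (I J : Set ℝ) (c : ℝ) : Set ℝ :=
  {a | a ≤ 1 ∧ ∃ m : ℕ, 0 < m ∧ ∃ f ∈ plusSet I, ∃ k ∈ finSums J, k ≠ 0 ∧
    a = ((m : ℝ) - 1 + f + k * c) / m}

/-- The closure `S̄ = S ∪ ∂S` of `S` in `ℝ`. -/
def clSet (S : Set ℝ) : Set ℝ := S ∪ accPts S

section Aux

lemma dcc_subset {S T : Set ℝ} (hT : T ⊆ S) (hS : DCC S) : DCC T := by
  rintro ⟨f, hf, hmem⟩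
  exact hS ⟨f, hf, fun n => hT (hmem n)⟩

lemma dcc_min {S T : Set ℝ} (hS : DCC S) (hT : T ⊆ S) {x : ℝ} (hx : x ∈ T) :
    ∃ a ∈ T, ∀ b ∈ T, a ≤ b := by
  by_contra h
  push_neg at h
  have h' : ∀ y : T, ∃ z : T, (z : ℝ) < (y : ℝ) := fun y => by
    obtain ⟨b, hb, hlt⟩ := h y y.2
    exact ⟨⟨b, hb⟩, hlt⟩
  choose F hF using h'
  refine hS ⟨fun n => (F^[n] ⟨x, hx⟩ : ℝ),
    strictAnti_nat_of_succ_lt (fun n => ?_), fun n => hT (F^[n] ⟨x, hx⟩).2⟩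
  rw [Function.iterate_succ_apply']
  exact hF _

lemma exists_mono_subseq {S : Set ℝ} (hS : DCC S) (f : ℕ → ℝ) (hf : ∀ n, f n ∈ S) :
    ∃ φ : ℕ → ℕ, StrictMono φ ∧ Monotone (f ∘ φ) := by
  have key : ∀ k : ℕ, ∃ n, k < n ∧ ∀ m, k < m → f n ≤ f m := by
    intro k
    obtain ⟨a, ⟨n, hn, rfl⟩, hmin⟩ := dcc_min hS (T := f '' {m | k < m})
      (by rintro y ⟨m, _, rfl⟩; exact hf m) ⟨k + 1, Nat.lt_succ_self k, rfl⟩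
    exact ⟨n, hn, fun m hm => hmin _ ⟨m, hm, rfl⟩⟩
  choose g hg1 hg2 using key
  refine ⟨fun n => g^[n + 1] 0, strictMono_nat_of_lt_succ (fun n => ?_), 
    monotone_nat_of_le_succ (fun n => ?_)⟩
  · have h2 : g^[n + 1 + 1] 0 = g (g^[n + 1] 0) := Function.iterate_succ_apply' g (n + 1) 0
    rw [h2]
    exact hg1 _
  · show f (g^[n + 1] 0) ≤ f (g^[n + 2] 0)
    have h1 : g^[n + 1] 0 = g (g^[n] 0) := Function.iterate_succ_apply' g n 0
    have h2 : g^[n + 2] 0 = g (g^[n + 1] 0) := Function.iterate_succ_apply' g (n + 1) 0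
    rw [h1, h2, h1]
    exact hg2 _ _ (lt_trans (hg1 _) (hg1 _))

lemma exists_mono_subseq_multi {S : Set ℝ} (hS : DCC S) :
    ∀ (c : ℕ) (G : ℕ → ℕ → ℝ), (∀ n p, G n p ∈ S) →
    ∃ φ : ℕ → ℕ, StrictMono φ ∧ ∀ p < c, Monotone fun n => G (φ n) p := by
  intro c
  induction c with
  | zero => exact fun G _ => ⟨id, strictMono_id, by omega⟩
  | succ c ih =>
    intro G hG
    obtain ⟨φ₁, hφ₁, hmono⟩ := ih G hG
    obtain ⟨φ₂, hφ₂, hmono₂⟩ := exists_mono_subseq hS (fun n => G (φ₁ n) c) (fun n => hG _ _)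
    refine ⟨φ₁ ∘ φ₂, hφ₁.comp hφ₂, fun p hp => ?_⟩
    rcases Nat.lt_succ_iff_lt_or_eq.mp hp with h | rfl
    · exact (hmono p h).comp hφ₂.monotone
    · exact hmono₂

lemma pigeonhole (N : ℕ) (m : ℕ → ℕ) (hm : ∀ n, m n ≤ N) :
    ∃ v, ∃ φ : ℕ → ℕ, StrictMono φ ∧ ∀ n, m (φ n) = v := by
  have hfr : ∃ v ≤ N, ∃ᶠ n in atTop, m n = v := by
    by_contra h
    push_neg at h
    have h' : ∀ᶠ n in atTop, ∀ v ∈ Finset.range (N + 1), m n ≠ v := by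
      rw [Filter.eventually_all_finset]
      intro v hv
      have := h v (Nat.lt_succ_iff.mp (Finset.mem_range.mp hv))
      exact this
    obtain ⟨n, hn⟩ := h'.exists
    exact hn (m n) (Finset.mem_range.mpr (Nat.lt_succ_of_le (hm n))) rfl
  obtain ⟨v, _, hv⟩ := hfr
  obtain ⟨φ, hφ, h⟩ := Filter.extraction_of_frequently_atTop hv
  exact ⟨v, φ, hφ, h⟩

lemma plusSet_nonneg {I : Set ℝ} {x : ℝ} (hx : x ∈ plusSet I) : 0 ≤ x := by
  rcases hx with h | ⟨⟨h0, _⟩, _⟩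
  · exact le_of_eq h.symm
  · exact h0

lemma decompose {I : Set ℝ} (hI0 : I ⊆ Set.Ici 0) {x : ℝ} (hx : x ∈ finSums I)
    (hx0 : 0 < x) (hx1 : x ≤ 1) :
    ∃ j : ℕ, 0 < j ∧ ∃ h : Fin j → ℝ, (∀ p, h p ∈ I ∩ Set.Ioc 0 1) ∧ x = ∑ p, h p := by
  classical
  obtain ⟨l, hl, g, hg, rfl⟩ := hx
  set x := ∑ p, g p with hxdef
  set T : Finset (Fin l) := Finset.univ.filter (fun p => 0 < g p) with hT
  have hzero : ∀ p ∈ Finset.univ.filter (fun p => ¬ 0 < g p), g p = 0 := by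
    intro p hp
    exact le_antisymm (not_lt.mp (Finset.mem_filter.mp hp).2) (hI0 (hg p))
  have hsum : x = ∑ p ∈ T, g p := by
    rw [hxdef, ← Finset.sum_filter_add_sum_filter_not Finset.univ (fun p => 0 < g p) g,
      Finset.sum_eq_zero hzero, add_zero]
  have hmem : ∀ p ∈ T, g p ∈ I ∩ Set.Ioc 0 1 := by
    intro p hp
    refine ⟨hg p, (Finset.mem_filter.mp hp).2, ?_⟩
    calc g p ≤ ∑ q ∈ T, g q :=
          Finset.single_le_sum (fun q hq => le_of_lt (Finset.mem_filter.mp hq).2) hp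
      _ = x := hsum.symm
      _ ≤ 1 := hx1
  have hcard : 0 < T.card := by
    rcases Finset.eq_empty_or_nonempty T with h | h
    · rw [hsum, h, Finset.sum_empty] at hx0
      exact absurd hx0 (lt_irrefl 0)
    · exact Finset.card_pos.mpr h
  refine ⟨T.card, hcard, fun q => g (T.equivFin.symm q : Fin l), 
    fun q => hmem _ (T.equivFin.symm q).2, ?_⟩
  rw [hsum, ← Finset.sum_coe_sort T g]
  exact Fintype.sum_equiv T.equivFin (fun t => g (t : Fin l))
    (fun q => g (T.equivFin.symm q : Fin l)) (fun t => by simp)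

lemma dcc_plusSet {I : Set ℝ} (hI0 : I ⊆ Set.Ici 0) (hI : DCC I) : DCC (plusSet I) := by
  classical
  rintro ⟨f, hanti, hmem⟩
  have hpos : ∀ n, 0 < f n := fun n =>
    lt_of_le_of_lt (plusSet_nonneg (hmem (n + 1))) (hanti (Nat.lt_succ_self n))
  have hsums : ∀ n, f n ∈ Set.Icc 0 1 ∩ finSums I := by
    intro n
    rcases hmem n with h | h
    · simp only [Set.mem_singleton_iff] at h
      exact absurd h (hpos n).ne'
    · exact h
  have hdec : ∀ n, ∃ j : ℕ, 0 < j ∧ ∃ h : Fin j → ℝ,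
      (∀ p, h p ∈ I ∩ Set.Ioc 0 1) ∧ f n = ∑ p, h p := fun n =>
    decompose hI0 (hsums n).2 (hpos n) (hsums n).1.2
  choose j hj h hh hfsum using hdec
  set J : Set ℝ := I ∩ Set.Ioc 0 1 with hJ
  have hJsub : J ⊆ I := Set.inter_subset_left
  have hJne : h 0 ⟨0, hj 0⟩ ∈ J := hh 0 _
  obtain ⟨ε, hεJ, hεmin⟩ := dcc_min hI hJsub hJne
  have hε0 : 0 < ε := hεJ.2.1
  -- bound on j n
  have hjbound : ∀ n, j n ≤ ⌈1 / ε⌉₊ := by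
    intro n
    have h1 : (j n : ℝ) * ε ≤ f n := by
      have := Finset.card_nsmul_le_sum Finset.univ (h n) ε
        (fun p _ => hεmin _ (hh n p))
      simpa [nsmul_eq_mul, ← hfsum n] using this
    have h2 : (j n : ℝ) ≤ 1 / ε := by
      rw [le_div_iff₀ hε0]
      exact h1.trans (hsums n).1.2
    exact_mod_cast h2.trans (Nat.le_ceil _)
  obtain ⟨c, φ₁, hφ₁, hc⟩ := pigeonhole _ _ hjbound
  -- padded coordinate functions
  set H : ℕ → ℕ → ℝ := fun n p => if hp : p < j n then h n ⟨p, hp⟩ else ε with hHdef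
  have hHmem : ∀ n p, H n p ∈ J := by
    intro n p
    by_cases hp : p < j n
    · simp only [hHdef, dif_pos hp]; exact hh n _
    · simp only [hHdef, dif_neg hp]; exact hεJ
  have hfH : ∀ n, f n = ∑ p ∈ Finset.range (j n), H n p := by
    intro n
    rw [hfsum n, ← Fin.sum_univ_eq_sum_range (fun p => H n p) (j n)]
    exact Finset.sum_congr rfl (fun p _ => by simp [hHdef, p.isLt])
  have hJdcc : DCC J := dcc_subset hJsub hI
  obtain ⟨φ₂, hφ₂, hmono⟩ := exists_mono_subseq_multi hJdcc c
    (fun n p => H (φ₁ n) p) (fun n p => hHmem _ _)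
  have hmonof : Monotone fun n => f (φ₁ (φ₂ n)) := by
    intro n n' hle
    show f (φ₁ (φ₂ n)) ≤ f (φ₁ (φ₂ n'))
    rw [hfH (φ₁ (φ₂ n)), hfH (φ₁ (φ₂ n')), hc (φ₂ n), hc (φ₂ n')]
    exact Finset.sum_le_sum (fun p hp => hmono p (Finset.mem_range.mp hp) hle)
  have : f (φ₁ (φ₂ 1)) < f (φ₁ (φ₂ 0)) := hanti (hφ₁ (hφ₂ Nat.zero_lt_one))
  exact absurd (hmonof (Nat.zero_le 1)) (not_le.mpr this)

end Aux

/-- If `I ⊆ [0,∞)` satisfies the DCC, then `D(I)` satisfies the DCC. -/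
theorem dcc_DSet (I : Set ℝ) (hI0 : I ⊆ Set.Ici 0) (hI : DCC I) :
    DCC (DSet I) := by
  rintro ⟨a, hanti, hmem⟩
  have h1 : ∀ n, a n ≤ 1 := fun n => (hmem n).1
  choose m hm f hf heq using fun n => (hmem n).2
  set δ : ℝ := 1 - a 1 with hδdef
  have hδ : 0 < δ := by
    have := hanti Nat.zero_lt_one
    have := h1 0
    simp only [hδdef]; linarith
  have hmbound : ∀ n, m (n + 1) ≤ ⌈1 / δ⌉₊ := by
    intro n
    have hmr : (1 : ℝ) ≤ m (n + 1) := by exact_mod_cast hm (n + 1)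
    have hf0 : 0 ≤ f (n + 1) := plusSet_nonneg (hf (n + 1))
    have han : a (n + 1) ≤ a 1 := hanti.antitone (Nat.succ_le_succ (Nat.zero_le n))
    have heqn := heq (n + 1)
    have hmne : (m (n + 1) : ℝ) ≠ 0 := by positivity
    have hma : (m (n + 1) : ℝ) * a (n + 1) = (m (n + 1) : ℝ) - 1 + f (n + 1) := by
      field_simp at heqn
      linarith [heqn]
    have h2 : (m (n + 1) : ℝ) * δ ≤ 1 := by nlinarith
    have h3 : (m (n + 1) : ℝ) ≤ 1 / δ := by
      rw [le_div_iff₀ hδ]; exact h2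
    exact_mod_cast h3.trans (Nat.le_ceil _)
  obtain ⟨v, φ, hφ, hv⟩ := pigeonhole _ _ hmbound
  have hv0 : 0 < v := by rw [← hv 0]; exact hm _
  have hvr : (0 : ℝ) < v := by exact_mod_cast hv0
  refine dcc_plusSet hI0 hI ⟨fun n => f (φ n + 1), ?_, fun n => hf _⟩
  intro n n' hlt
  have hlt' : a (φ n' + 1) < a (φ n + 1) := hanti (Nat.succ_lt_succ (hφ hlt))
  have e1 := heq (φ n + 1)
  have e2 := heq (φ n' + 1)
  rw [hv n] at e1
  rw [hv n'] at e2
  have hvne : (v : ℝ) ≠ 0 := ne_of_gt hvr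
  have g1 : (v : ℝ) * a (φ n + 1) = (v : ℝ) - 1 + f (φ n + 1) := by
    field_simp at e1; linarith [e1]
  have g2 : (v : ℝ) * a (φ n' + 1) = (v : ℝ) - 1 + f (φ n' + 1) := by
    field_simp at e2; linarith [e2]
  nlinarith [hlt', hvr]
end

section
/- Let I ⊆ [0,∞) be a set satisfying the descending chain condition. Then every accumulation point of D(I) in ℝ is either equal to 1 or lies in D(Ī); that is, ∂(D(I)) ⊆ {1} ∪ D(Ī), where Ī = I ∪ ∂I is the closure of I in ℝ and D(Ī) is defined using (Ī)₊. -/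
open Filter

lemma isAccPt_iff_closure (x : ℝ) (S : Set ℝ) : IsAccPt x S ↔ x ∈ closure (S \ {x}) := by
  rw [Metric.mem_closure_iff]
  constructor
  · intro h ε hε
    obtain ⟨y, hy, hyx, hlt⟩ := h ε hε
    exact ⟨y, ⟨hy, hyx⟩, by rwa [Real.dist_eq, abs_sub_comm]⟩
  · intro h ε hε
    obtain ⟨y, ⟨hy, hyx⟩, hlt⟩ := h ε hε
    exact ⟨y, hy, hyx, by rwa [Real.dist_eq, abs_sub_comm] at hlt⟩

lemma closure_subset_clSet (S : Set ℝ) : closure S ⊆ clSet S := by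
  intro x hx
  by_cases hxS : x ∈ S
  · exact Or.inl hxS
  · refine Or.inr ?_
    have : S \ {x} = S := by
      ext y; simp only [Set.mem_diff, Set.mem_singleton_iff]
      exact ⟨fun h => h.1, fun h => ⟨h, fun hyx => hxS (hyx ▸ h)⟩⟩
    show IsAccPt x S
    rw [isAccPt_iff_closure, this]
    exact hx

lemma exists_pos_lb (I : Set ℝ) (hI0 : I ⊆ Set.Ici 0) (hI : DCC I) :
    ∃ ε > 0, ∀ x ∈ I, x ≠ 0 → ε ≤ x := by
  by_contra hc
  push_neg at hc
  have h : ∀ y : ℝ, 0 < y → ∃ x : ℝ, (x ∈ I ∧ 0 < x) ∧ x < y := by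
    intro y hy
    obtain ⟨x, hxI, hx0, hxy⟩ := hc y hy
    exact ⟨x, ⟨hxI, lt_of_le_of_ne (hI0 hxI) (Ne.symm hx0)⟩, hxy⟩
  let f : ℕ → {x : ℝ // x ∈ I ∧ 0 < x} := fun n =>
    Nat.rec ⟨(h 1 one_pos).choose, (h 1 one_pos).choose_spec.1⟩
      (fun _ p => ⟨(h p.1 p.2.2).choose, (h p.1 p.2.2).choose_spec.1⟩) n
  have hf : ∀ n, (f (n+1)).1 < (f n).1 := fun n => (h (f n).1 (f n).2.2).choose_spec.2
  exact hI ⟨fun n => (f n).1, strictAnti_nat_of_succ_lt hf, fun n => (f n).2.1⟩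

lemma finSums_trim (I : Set ℝ) (hI0 : I ⊆ Set.Ici 0) {ε : ℝ}
    (hε : ∀ x ∈ I, x ≠ 0 → ε ≤ x) {t : ℝ} (ht : t ∈ finSums I) (ht0 : 0 < t) (ht1 : t ≤ 1) :
    ∃ l : ℕ, 0 < l ∧ ε * l ≤ 1 ∧
      ∃ g : Fin l → ℝ, (∀ p, g p ∈ I ∧ ε ≤ g p ∧ g p ≤ 1) ∧ t = ∑ p, g p := by
  obtain ⟨l₀, hl₀, g₀, hg₀, hsum⟩ := ht
  classical
  set s : Finset (Fin l₀) := Finset.univ.filter (fun p => g₀ p ≠ 0) with hs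
  have hsum' : t = ∑ p ∈ s, g₀ p := by
    rw [hsum, hs, Finset.sum_filter_ne_zero]
  set l := s.card with hl
  set e := s.equivFin with he
  set g : Fin l → ℝ := fun p => g₀ (e.symm p).1 with hg
  have hsum'' : t = ∑ p, g p := by
    rw [hsum']
    rw [← Finset.sum_attach s (fun x => g₀ x)]
    exact (Equiv.sum_comp e.symm (fun x => g₀ x.1)).symm
  have hmem : ∀ p : Fin l, g p ∈ I ∧ g p ≠ 0 := by
    intro p
    have h2 := (e.symm p).2
    rw [Finset.mem_filter] at h2
    exact ⟨hg₀ _, h2.2⟩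
  have hnonneg : ∀ p ∈ (Finset.univ : Finset (Fin l)), 0 ≤ g p := fun p _ => hI0 (hmem p).1
  have hlb : ∀ p : Fin l, ε ≤ g p := fun p => hε _ (hmem p).1 (hmem p).2
  have hub : ∀ p : Fin l, g p ≤ 1 := by
    intro p
    calc g p ≤ ∑ q, g q := Finset.single_le_sum hnonneg (Finset.mem_univ p)
    _ = t := hsum''.symm
    _ ≤ 1 := ht1
  have hlpos : 0 < l := by
    rcases Nat.eq_zero_or_pos l with h0 | h
    · exfalso
      rw [hsum''] at ht0
      have : (Finset.univ : Finset (Fin l)) = ∅ := by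
        rw [Finset.univ_eq_empty_iff]
        rw [h0]; infer_instance
      rw [this, Finset.sum_empty] at ht0
      exact lt_irrefl _ ht0
    · exact h
  have hεl : ε * l ≤ 1 := by
    have : ε * l = ∑ _p : Fin l, ε := by
      rw [Finset.sum_const, Finset.card_univ, Fintype.card_fin, nsmul_eq_mul, mul_comm]
    rw [this]
    calc ∑ _p : Fin l, ε ≤ ∑ p, g p := Finset.sum_le_sum (fun p _ => hlb p)
    _ = t := hsum''.symm
    _ ≤ 1 := ht1
  exact ⟨l, hlpos, hεl, g, fun p => ⟨(hmem p).1, hlb p, hub p⟩, hsum''⟩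

lemma key_lemma (I : Set ℝ) (hI0 : I ⊆ Set.Ici 0) (hI : DCC I) {f : ℝ} (hfpos : 0 < f)
    (hf : f ∈ closure (Set.Icc 0 1 ∩ finSums I)) : f ∈ finSums (clSet I) := by
  classical
  obtain ⟨ε, hε0, hε⟩ := exists_pos_lb I hI0 hI
  set N : ℕ := ⌈1/ε⌉₊ with hN
  -- a sequence in T converging to f
  obtain ⟨u, hu, hulim⟩ := mem_closure_iff_seq_limit.mp hf
  -- eventually u n > 0
  have hev : ∀ᶠ n in atTop, f/2 < u n := by
    have := hulim (Ioi_mem_nhds (show f/2 < f by linarith))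
    filter_upwards [this] with n hn using hn
  obtain ⟨n₀, hn₀⟩ := eventually_atTop.mp hev
  set v : ℕ → ℝ := fun n => u (n + n₀) with hv
  have hvlim : Tendsto v atTop (nhds f) := hulim.comp (tendsto_add_atTop_nat n₀)
  have hvpos : ∀ n, 0 < v n := fun n => lt_trans (by linarith) (hn₀ (n + n₀) (by omega))
  have hvmem : ∀ n, v n ∈ Set.Icc 0 1 ∩ finSums I := fun n => hu (n + n₀)
  -- decompose each v n
  have hdec : ∀ n, ∃ L ∈ Finset.Icc 1 N, ∃ g : Fin L → ℝ,
      (∀ p, g p ∈ I ∧ ε ≤ g p ∧ g p ≤ 1) ∧ v n = ∑ p, g p := by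
    intro n
    obtain ⟨l, hlpos, hεl, g, hg, hsum⟩ :=
      finSums_trim I hI0 hε (hvmem n).2 (hvpos n) (hvmem n).1.2
    refine ⟨l, ?_, g, hg, hsum⟩
    rw [Finset.mem_Icc]
    refine ⟨hlpos, ?_⟩
    have h1 : (l : ℝ) ≤ 1/ε := by
      rw [le_div_iff₀ hε0]; linarith [mul_comm ε (l:ℝ)]
    have h2 : (1:ℝ)/ε ≤ N := Nat.le_ceil _
    exact_mod_cast Nat.cast_le.mp (le_trans h1 h2)
  set lfun : ℕ → Finset.Icc 1 N := fun n => ⟨(hdec n).choose, (hdec n).choose_spec.1⟩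
  obtain ⟨⟨L, hL⟩, hfib⟩ := Finite.exists_infinite_fiber lfun
  have hfreq : ∃ᶠ n in atTop, lfun n = ⟨L, hL⟩ := by
    rw [Nat.frequently_atTop_iff_infinite]
    exact Set.infinite_coe_iff.mp hfib
  obtain ⟨φ, hφ, hφspec⟩ := extraction_of_frequently_atTop hfreq
  -- fixed-length decompositions
  have hdecL : ∀ n, ∃ g : Fin L → ℝ,
      (∀ p, g p ∈ I ∧ ε ≤ g p ∧ g p ≤ 1) ∧ v (φ n) = ∑ p, g p := by
    intro n
    have h1 := (hdec (φ n)).choose_spec.2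
    have h2 : (hdec (φ n)).choose = L := congrArg Subtype.val (hφspec n)
    rw [h2] at h1
    exact h1
  set w : ℕ → (Fin L → ℝ) := fun n => (hdecL n).choose with hw
  have hwspec : ∀ n, (∀ p, w n p ∈ I ∧ ε ≤ w n p ∧ w n p ≤ 1) ∧ v (φ n) = ∑ p, w n p :=
    fun n => (hdecL n).choose_spec
  -- compactness
  have hK : IsCompact (Set.univ.pi (fun _ : Fin L => Set.Icc ε 1)) :=
    isCompact_univ_pi (fun _ => isCompact_Icc)
  have hwK : ∀ n, w n ∈ Set.univ.pi (fun _ : Fin L => Set.Icc ε 1) := by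
    intro n p _
    exact ⟨(hwspec n).1 p |>.2.1, (hwspec n).1 p |>.2.2⟩
  obtain ⟨G, _, ψ, hψ, hconv⟩ := hK.tendsto_subseq hwK
  have hcoord : ∀ p, Tendsto (fun n => w (ψ n) p) atTop (nhds (G p)) := by
    intro p
    exact (tendsto_pi_nhds.mp hconv) p
  have hGcl : ∀ p, G p ∈ clSet I := by
    intro p
    apply closure_subset_clSet
    exact mem_closure_of_tendsto (hcoord p) (Eventually.of_forall (fun n => ((hwspec (ψ n)).1 p).1))
  -- sums converge
  have hsumconv : Tendsto (fun n => ∑ p, w (ψ n) p) atTop (nhds (∑ p, G p)) :=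
    tendsto_finset_sum _ (fun p _ => hcoord p)
  have hsumv : (fun n => ∑ p, w (ψ n) p) = fun n => v (φ (ψ n)) := by
    funext n; exact ((hwspec (ψ n)).2).symm
  have hvlim2 : Tendsto (fun n => v (φ (ψ n))) atTop (nhds f) :=
    hvlim.comp ((hφ.comp hψ).tendsto_atTop)
  rw [hsumv] at hsumconv
  have hfeq : f = ∑ p, G p := tendsto_nhds_unique hvlim2 hsumconv
  have hLpos : 0 < L := (Finset.mem_Icc.mp hL).1
  exact ⟨L, hLpos, G, hGcl, hfeq⟩

lemma plusSet_subset_Icc (I : Set ℝ) : plusSet I ⊆ Set.Icc 0 1 := by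
  rintro x (hx | hx)
  · rw [Set.mem_singleton_iff] at hx; rw [hx]; exact ⟨le_refl 0, zero_le_one⟩
  · exact hx.1


/-- If `I ⊆ [0,∞)` satisfies the DCC, then `∂(D(I)) ⊆ {1} ∪ D(Ī)`. -/
theorem accPts_DSet_subset (I : Set ℝ) (hI0 : I ⊆ Set.Ici 0) (hI : DCC I) :
    accPts (DSet I) ⊆ {1} ∪ DSet (clSet I) := by
  intro a ha
  have h1 : a ∈ closure (DSet I \ {a}) := (isAccPt_iff_closure a _).mp ha
  have ha1 : a ≤ 1 := by
    exact closure_minimal (fun y hy => hy.1.1) isClosed_Iic h1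
  by_cases haeq : a = 1
  · exact Or.inl haeq
  refine Or.inr ?_
  have halt : a < 1 := lt_of_le_of_ne ha1 haeq
  set δ : ℝ := 1 - a with hδ
  have hδpos : 0 < δ := by simp [hδ]; linarith
  set M : ℕ := ⌈2/δ⌉₊ with hM
  set E : ℕ → Set ℝ := fun m => {y | ∃ f ∈ plusSet I, y = ((m : ℝ) - 1 + f) / m} with hE
  -- a is in closure of the localized set
  have h2 : a ∈ closure ((DSet I \ {a}) ∩ Metric.ball a (δ/2)) := by
    rw [Metric.mem_closure_iff]
    intro η hη
    rw [Metric.mem_closure_iff] at h1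
    obtain ⟨b, hb, hlt⟩ := h1 (min η (δ/2)) (lt_min hη (by linarith))
    refine ⟨b, ⟨hb, ?_⟩, lt_of_lt_of_le hlt (min_le_left _ _)⟩
    rw [Metric.mem_ball, dist_comm]
    exact lt_of_lt_of_le hlt (min_le_right _ _)
  -- covering by finitely many E m
  have hcov : (DSet I \ {a}) ∩ Metric.ball a (δ/2) ⊆ ⋃ m ∈ Finset.Icc 1 M, (E m \ {a}) := by
    rintro y ⟨⟨⟨hy1, m, hm, f, hf, hyeq⟩, hyne⟩, hyball⟩
    rw [Metric.mem_ball, Real.dist_eq] at hyball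
    have hf0 : 0 ≤ f := (plusSet_subset_Icc I hf).1
    have hmR : (0:ℝ) < m := by exact_mod_cast hm
    have hy2 : 1 - 1/m ≤ y := by
      have he1 : 1 - 1/(m:ℝ) = ((m:ℝ)-1)/m := by field_simp
      rw [hyeq, he1, div_le_div_iff₀ hmR hmR]
      nlinarith
    have hy3 : y < 1 - δ/2 := by
      have : |y - a| < δ/2 := hyball
      have := abs_lt.mp this
      simp only [hδ] at *
      linarith [this.2]
    have hmlt : (m:ℝ) < 2/δ := by
      have h4 : δ/2 < 1/m := by linarith
      rw [div_lt_div_iff₀ (by linarith) hmR] at h4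
      rw [lt_div_iff₀ hδpos]
      linarith
    have hmM : m ≤ M := by
      have : (m:ℝ) ≤ (M:ℝ) := le_trans (le_of_lt hmlt) (Nat.le_ceil _)
      exact_mod_cast this
    apply Set.mem_biUnion (Finset.mem_coe.mp (Finset.mem_Icc.mpr ⟨hm, hmM⟩))
    exact ⟨⟨f, hf, hyeq⟩, hyne⟩
  have h3 : a ∈ ⋃ m ∈ Finset.Icc 1 M, closure (E m \ {a}) := by
    have hcl := closure_mono hcov h2
    have heq : closure (⋃ m ∈ Finset.Icc 1 M, (E m \ {a}))
        = ⋃ m ∈ Finset.Icc 1 M, closure (E m \ {a}) :=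
      Set.Finite.closure_biUnion (Finset.Icc 1 M).finite_toSet _
    rwa [heq] at hcl
  obtain ⟨m, hmIcc, hmem⟩ := Set.mem_iUnion₂.mp h3
  have hm1 : 1 ≤ m := (Finset.mem_Icc.mp hmIcc).1
  have hmR : (0:ℝ) < m := by exact_mod_cast hm1
  set fstar : ℝ := m * a - (m - 1) with hfstar
  have hafstar : a = ((m:ℝ) - 1 + fstar) / m := by
    rw [hfstar]; field_simp; ring
  -- fstar is in closure of plusSet I \ {fstar}
  have h4 : fstar ∈ closure (plusSet I \ {fstar}) := by
    rw [Metric.mem_closure_iff]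
    intro η hη
    rw [Metric.mem_closure_iff] at hmem
    obtain ⟨y, ⟨⟨f, hf, hyeq⟩, hyne⟩, hyd⟩ := hmem (η/m) (by positivity)
    rw [Set.mem_singleton_iff] at hyne
    have hfy : f = m * y - (m - 1) := by rw [hyeq]; field_simp; ring
    refine ⟨f, ⟨hf, ?_⟩, ?_⟩
    · intro hfeq
      rw [Set.mem_singleton_iff] at hfeq
      apply hyne
      have : y = ((m:ℝ) - 1 + f) / m := hyeq
      rw [this, hfeq, ← hafstar]
    · rw [Real.dist_eq, hfstar, hfy]
      have : m * a - (↑m - 1) - (m * y - (↑m - 1)) = m * (a - y) := by ring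
      rw [this, abs_mul, abs_of_pos hmR]
      rw [Real.dist_eq] at hyd
      calc (m:ℝ) * |a - y| < m * (η/m) := by
            apply mul_lt_mul_of_pos_left hyd hmR
      _ = η := by field_simp
  have hfIcc : fstar ∈ Set.Icc 0 1 := by
    exact closure_minimal (fun y hy => plusSet_subset_Icc I hy.1) isClosed_Icc h4
  by_cases hf0 : fstar = 0
  · refine ⟨ha1, m, hm1, 0, Or.inl rfl, ?_⟩
    rw [hafstar, hf0]
  · have hfpos : 0 < fstar := lt_of_le_of_ne hfIcc.1 (Ne.symm hf0)
    have h5 : fstar ∈ closure (Set.Icc 0 1 ∩ finSums I) := by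
      have hsub : plusSet I \ {fstar} ⊆ {(0:ℝ)} ∪ (Set.Icc 0 1 ∩ finSums I) :=
        fun y hy => hy.1
      have := closure_mono hsub h4
      rw [closure_union, closure_singleton] at this
      rcases this with h | h
      · exact absurd (Set.mem_singleton_iff.mp h) hf0
      · exact h
    have h6 : fstar ∈ finSums (clSet I) := key_lemma I hI0 hI hfpos h5
    exact ⟨ha1, m, hm1, fstar, Or.inr ⟨hfIcc, h6⟩, hafstar⟩
end

section
/- Let I ⊆ [0,∞) be a set satisfying the descending chain condition whose set ∂I of accumulation points in ℝ is finite. Then there exists an integer m ≥ 0 such that the m-th iterated accumulation point set ∂^m(I₊) is empty; that is, I₊ has no accumulation points of arbitrarily high order. -/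
open Filter

open Pointwise

lemma accPts_mono {S T : Set ℝ} (h : S ⊆ T) : accPts S ⊆ accPts T := by
  intro x hx ε hε
  obtain ⟨y, hy, hyx, hye⟩ := hx ε hε
  exact ⟨y, h hy, hyx, hye⟩

lemma not_accPts_iff {x : ℝ} {S : Set ℝ} :
    x ∉ accPts S ↔ ∃ ε > 0, ∀ y ∈ S, y ≠ x → ε ≤ |y - x| := by
  simp only [accPts, Set.mem_setOf_eq, IsAccPt]
  push_neg
  rfl

lemma accPts_union {S T : Set ℝ} : accPts (S ∪ T) ⊆ accPts S ∪ accPts T := by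
  intro x hx
  by_contra hc
  rw [Set.mem_union, not_or, not_accPts_iff, not_accPts_iff] at hc
  obtain ⟨⟨ε₁, hε₁, h1⟩, ⟨ε₂, hε₂, h2⟩⟩ := hc
  obtain ⟨y, hy, hyx, hye⟩ := hx (min ε₁ ε₂) (lt_min hε₁ hε₂)
  rcases hy with hy | hy
  · exact absurd hye (not_lt.2 ((min_le_left _ _).trans (h1 y hy hyx)))
  · exact absurd hye (not_lt.2 ((min_le_right _ _).trans (h2 y hy hyx)))



lemma accPts_accPts {S : Set ℝ} : accPts (accPts S) ⊆ accPts S := by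
  intro x hx ε hε
  obtain ⟨y, hy, hyx, hye⟩ := hx (ε/2) (by positivity)
  have h1 : (0:ℝ) < |y - x| := abs_pos.2 (sub_ne_zero.2 hyx)
  obtain ⟨z, hz, hzy, hze⟩ := hy (min |y - x| (ε/2 - |y - x|)) (lt_min h1 (by linarith))
  have t1 : |z - x| ≤ |z - y| + |y - x| := abs_sub_le z y x
  have t2 : |y - x| ≤ |y - z| + |z - x| := abs_sub_le y z x
  have t3 : |y - z| = |z - y| := abs_sub_comm y z
  have m1 : |z - y| < |y - x| := hze.trans_le (min_le_left _ _)
  have m2 : |z - y| < ε/2 - |y - x| := hze.trans_le (min_le_right _ _)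
  refine ⟨z, hz, ?_, by linarith⟩
  intro hzx
  subst hzx
  simp at t2 t3
  linarith

lemma accPts_subset_closure {S : Set ℝ} : accPts S ⊆ closure S := by
  intro x hx
  rw [Metric.mem_closure_iff]
  intro ε hε
  obtain ⟨y, hy, _, hye⟩ := hx ε hε
  exact ⟨y, hy, by rw [Real.dist_eq, abs_sub_comm]; exact hye⟩

lemma accPts_subset_Icc {S : Set ℝ} {a b : ℝ} (h : S ⊆ Set.Icc a b) :
    accPts S ⊆ Set.Icc a b :=
  fun _ hx => (isClosed_Icc.closure_subset_iff.mpr h) (accPts_subset_closure hx)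

lemma accPts_finite {S : Set ℝ} (h : S.Finite) : accPts S = ∅ := by
  rw [Set.eq_empty_iff_forall_notMem]
  intro x hx
  have hfin : (S \ {x}).Finite := h.diff (t := {x})
  by_cases hne : (S \ {x}).Nonempty
  · set F := hfin.toFinset with hF
    have hFne : F.Nonempty := by simpa [hF] using hne
    set d := (F.image fun y => |y - x|).min' (hFne.image _) with hd
    have hdmem := (F.image fun y => |y - x|).min'_mem (hFne.image _)
    rw [Finset.mem_image] at hdmem
    obtain ⟨y₀, hy₀, hy₀d⟩ := hdmem
    have hy₀' : y₀ ∈ S \ {x} := by simpa [hF] using hy₀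
    have hdpos : 0 < d := by
      rw [hd, ← hy₀d]
      exact abs_pos.2 (sub_ne_zero.2 (by simpa using hy₀'.2))
    obtain ⟨z, hz, hzx, hze⟩ := hx d hdpos
    have : d ≤ |z - x| := Finset.min'_le _ _ (Finset.mem_image.2 ⟨z, by simp [hF, hz, hzx], rfl⟩)
    linarith
  · obtain ⟨z, hz, hzx, _⟩ := hx 1 one_pos
    exact hne ⟨z, hz, hzx⟩

lemma mem_clSet_of_tendsto {B : Set ℝ} {u : ℕ → ℝ} {β : ℝ} (hu : ∀ n, u n ∈ B)
    (hlim : Tendsto u atTop (nhds β)) : β ∈ clSet B := by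
  by_cases hβ : β ∈ B
  · exact Or.inl hβ
  · refine Or.inr (fun ε hε => ?_)
    obtain ⟨N, hN⟩ := (Metric.tendsto_atTop.mp hlim) ε hε
    refine ⟨u N, hu N, fun h => hβ (h ▸ hu N), ?_⟩
    have := hN N le_rfl
    rwa [Real.dist_eq] at this

lemma accPts_add_subset {a b c d : ℝ} {A B : Set ℝ} (hA : A ⊆ Set.Icc a b)
    (hB : B ⊆ Set.Icc c d) :
    accPts (A + B) ⊆ (accPts A + clSet B) ∪ (clSet A + accPts B) := by
  intro x hx
  have H : ∀ n : ℕ, ∃ p : ℝ × ℝ, p.1 ∈ A ∧ p.2 ∈ B ∧ p.1 + p.2 ≠ x ∧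
      |p.1 + p.2 - x| < 1/(n+1) := by
    intro n
    obtain ⟨y, hy, hyx, hye⟩ := hx (1/(n+1)) (by positivity)
    obtain ⟨u, hu, v, hv, huv⟩ := Set.mem_add.mp hy
    exact ⟨(u, v), hu, hv, by rw [huv]; exact hyx, by rw [huv]; exact hye⟩
  choose p hp1 hp2 hp3 hp4 using H
  -- the sequence of sums tends to x
  have hsum : Tendsto (fun n => (p n).1 + (p n).2) atTop (nhds x) := by
    rw [Metric.tendsto_atTop]
    intro ε hε
    obtain ⟨N, hN⟩ := exists_nat_one_div_lt hε
    refine ⟨N, fun n hn => ?_⟩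
    rw [Real.dist_eq]
    refine (hp4 n).trans_le ((one_div_le_one_div_of_le (by positivity) ?_).trans hN.le)
    exact_mod_cast by exact_mod_cast add_le_add_left (Nat.cast_le.2 hn) 1
  -- extract convergent subsequences
  obtain ⟨α, hαmem, φ, hφ, hconvA⟩ :=
    (isCompact_Icc (a := a) (b := b)).tendsto_subseq (fun n => hA (hp1 n))
  obtain ⟨β, hβmem, ψ, hψ, hconvB⟩ :=
    (isCompact_Icc (a := c) (b := d)).tendsto_subseq
      (fun n => hB (hp2 (φ n)))
  set σ : ℕ → ℕ := φ ∘ ψ with hσ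
  have hu : Tendsto (fun n => (p (σ n)).1) atTop (nhds α) := hconvA.comp hψ.tendsto_atTop
  have hv : Tendsto (fun n => (p (σ n)).2) atTop (nhds β) := hconvB
  have hsum' : Tendsto (fun n => (p (σ n)).1 + (p (σ n)).2) atTop (nhds x) :=
    hsum.comp (hφ.comp hψ).tendsto_atTop
  have hxab : x = α + β := tendsto_nhds_unique hsum' (hu.add hv)
  have key : α ∈ accPts A ∨ β ∈ accPts B := by
    by_contra hc
    rw [not_or, not_accPts_iff, not_accPts_iff] at hc
    obtain ⟨⟨ε₁, hε₁, h1⟩, ⟨ε₂, hε₂, h2⟩⟩ := hc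
    obtain ⟨N₁, hN₁⟩ := (Metric.tendsto_atTop.mp hu) ε₁ hε₁
    obtain ⟨N₂, hN₂⟩ := (Metric.tendsto_atTop.mp hv) ε₂ hε₂
    set n := max N₁ N₂
    have e1 : (p (σ n)).1 = α := by
      by_contra hne
      have := h1 _ (hp1 (σ n)) hne
      have := hN₁ n (le_max_left _ _)
      rw [Real.dist_eq] at this
      linarith
    have e2 : (p (σ n)).2 = β := by
      by_contra hne
      have := h2 _ (hp2 (σ n)) hne
      have := hN₂ n (le_max_right _ _)
      rw [Real.dist_eq] at this
      linarith
    exact hp3 (σ n) (by rw [e1, e2, hxab])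
  rcases key with hα | hβ
  · exact Or.inl (hxab ▸ Set.add_mem_add hα
      (mem_clSet_of_tendsto (fun n => hp2 (σ n)) hv))
  · exact Or.inr (hxab ▸ Set.add_mem_add
      (mem_clSet_of_tendsto (fun n => hp1 (σ n)) hu) hβ)

lemma accPts_empty : accPts (∅ : Set ℝ) = ∅ := by
  rw [Set.eq_empty_iff_forall_notMem]
  intro x hx
  obtain ⟨y, hy, -, -⟩ := hx 1 one_pos
  exact hy

lemma iter_accPts_mono (m : ℕ) : ∀ {S T : Set ℝ}, S ⊆ T →
    accPts^[m] S ⊆ accPts^[m] T := by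
  induction m with
  | zero => intro S T h; simpa using h
  | succ n ih =>
    intro S T h
    rw [Function.iterate_succ_apply, Function.iterate_succ_apply]
    exact ih (accPts_mono h)

lemma iter_accPts_empty (m : ℕ) : accPts^[m] (∅ : Set ℝ) = ∅ := by
  induction m with
  | zero => rfl
  | succ n ih => rw [Function.iterate_succ_apply, accPts_empty, ih]

lemma iter_accPts_of_le {S : Set ℝ} {m m' : ℕ} (h : accPts^[m] S = ∅) (hm : m ≤ m') :
    accPts^[m'] S = ∅ := by
  obtain ⟨k, rfl⟩ := Nat.exists_eq_add_of_le hm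
  rw [Nat.add_comm, Function.iterate_add_apply, h, iter_accPts_empty]

lemma iter_accPts_union (m : ℕ) : ∀ {S T : Set ℝ},
    accPts^[m] (S ∪ T) ⊆ accPts^[m] S ∪ accPts^[m] T := by
  induction m with
  | zero => intro S T; simp
  | succ n ih =>
    intro S T
    rw [Function.iterate_succ_apply, Function.iterate_succ_apply,
      Function.iterate_succ_apply]
    exact (iter_accPts_mono n accPts_union).trans ih

lemma accPts_clSet (S : Set ℝ) : accPts (clSet S) = accPts S := by
  refine subset_antisymm ?_ (accPts_mono Set.subset_union_left)
  exact accPts_union.trans (Set.union_subset subset_rfl accPts_accPts)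

lemma clSet_subset_Icc {S : Set ℝ} {a b : ℝ} (h : S ⊆ Set.Icc a b) :
    clSet S ⊆ Set.Icc a b :=
  Set.union_subset h (accPts_subset_Icc h)

/-- Cantor–Bendixson rank is subadditive for sumsets of bounded sets. -/
lemma rank_add : ∀ (n : ℕ) {a b c d : ℝ} {A B : Set ℝ}, A ⊆ Set.Icc a b →
    B ⊆ Set.Icc c d → ∀ {i j : ℕ}, i + j = n → accPts^[i] A = ∅ →
    accPts^[j] B = ∅ → accPts^[n] (A + B) = ∅ := by
  intro n
  induction n using Nat.strong_induction_on with
  | _ n IH =>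
    intro a b c d A B hA hB i j hij hi hj
    rcases Nat.eq_zero_or_pos i with rfl | hi0
    · have hAe : A = ∅ := hi
      rw [hAe, Set.empty_add, iter_accPts_empty]
    rcases Nat.eq_zero_or_pos j with rfl | hj0
    · have hBe : B = ∅ := hj
      rw [hBe, Set.add_empty, iter_accPts_empty]
    obtain ⟨i', rfl⟩ := Nat.exists_eq_add_of_lt hi0
    obtain ⟨j', rfl⟩ := Nat.exists_eq_add_of_lt hj0
    rw [Nat.zero_add] at *
    -- n = (i'+1) + (j'+1), n ≥ 1
    have hn : n = (i' + (j' + 1)) + 1 := by omega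
    subst hn
    rw [Function.iterate_succ_apply]
    refine Set.eq_empty_of_subset_empty ?_
    have step := accPts_add_subset hA hB
    refine (iter_accPts_mono _ step).trans ?_
    refine (iter_accPts_union _).trans ?_
    have h1 : accPts^[i' + (j' + 1)] (accPts A + clSet B) = ∅ := by
      refine IH _ (lt_add_one _) (accPts_subset_Icc hA) (clSet_subset_Icc hB)
        (i := i') (j := j' + 1) rfl ?_ ?_
      · rw [← Function.iterate_succ_apply]; exact hi
      · rw [Function.iterate_succ_apply, accPts_clSet]
        rw [← Function.iterate_succ_apply]; exact hj
    have h2 : accPts^[i' + (j' + 1)] (clSet A + accPts B) = ∅ := by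
      refine IH _ (lt_add_one _) (clSet_subset_Icc hA) (accPts_subset_Icc hB)
        (i := i' + 1) (j := j') (by omega) ?_ ?_
      · rw [Function.iterate_succ_apply, accPts_clSet]
        rw [← Function.iterate_succ_apply]; exact hi
      · rw [← Function.iterate_succ_apply]; exact hj
    rw [h1, h2, Set.union_empty]

/-- Cumulative sumsets: `cumSums J l` contains all sums of at most `l` elements of `J`. -/
def cumSums (J : Set ℝ) : ℕ → Set ℝ
  | 0 => {0}
  | l + 1 => cumSums J l ∪ (cumSums J l + J)

lemma cumSums_mono (J : Set ℝ) {l m : ℕ} (h : l ≤ m) : cumSums J l ⊆ cumSums J m := by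
  induction m with
  | zero => rw [Nat.le_zero.mp h]
  | succ n ih =>
    rcases Nat.lt_or_ge l (n + 1) with h' | h'
    · exact (ih (Nat.lt_succ_iff.mp h')).trans Set.subset_union_left
    · rw [le_antisymm h h']

lemma cumSums_subset_Icc {J : Set ℝ} (hJ : J ⊆ Set.Icc 0 1) (l : ℕ) :
    cumSums J l ⊆ Set.Icc 0 l := by
  induction l with
  | zero => simp [cumSums]
  | succ n ih =>
    rw [cumSums]
    refine Set.union_subset (ih.trans (Set.Icc_subset_Icc le_rfl (by push_cast; linarith))) ?_
    rintro x hx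
    obtain ⟨u, hu, v, hv, rfl⟩ := Set.mem_add.mp hx
    have h1 := ih hu
    have h2 := hJ hv
    simp only [Set.mem_Icc] at *
    push_cast
    constructor <;> linarith [h1.1, h1.2, h2.1, h2.2]

lemma cumSums_rank {J : Set ℝ} (hJ : J ⊆ Set.Icc 0 1)
    (hJ2 : accPts (accPts J) = ∅) (l : ℕ) :
    accPts^[2*l+1] (cumSums J l) = ∅ := by
  induction l with
  | zero =>
    show accPts^[1] ({0} : Set ℝ) = ∅
    rw [Function.iterate_one]
    exact accPts_finite (Set.finite_singleton 0)
  | succ n ih =>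
    have hrank2 : accPts^[2] J = ∅ := by
      rw [show (2:ℕ) = 1 + 1 from rfl, Function.iterate_add_apply,
        Function.iterate_one]
      exact hJ2
    have hadd : accPts^[(2*n+1) + 2] (cumSums J n + J) = ∅ :=
      rank_add _ (cumSums_subset_Icc hJ n) hJ rfl ih hrank2
    have h1 : accPts^[2*(n+1)+1] (cumSums J n) = ∅ :=
      iter_accPts_of_le ih (by omega)
    have h2 : accPts^[2*(n+1)+1] (cumSums J n + J) = ∅ := by
      rw [show 2*(n+1)+1 = (2*n+1)+2 from by omega]; exact hadd
    rw [cumSums]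
    refine Set.eq_empty_of_subset_empty ((iter_accPts_union _).trans ?_)
    rw [h1, h2, Set.union_empty]

/-- If `I ⊆ [0,∞)` satisfies the DCC and `∂I` is finite, then some iterated
accumulation point set `∂^m(I₊)` is empty. -/
theorem iterated_accPts_empty (I : Set ℝ) (hI0 : I ⊆ Set.Ici 0) (hI : DCC I)
    (hfin : (accPts I).Finite) :
    ∃ m : ℕ, accPts^[m] (plusSet I) = ∅ := by
  -- Step 1: positive elements of I are bounded below by some δ > 0.
  have hδ : ∃ δ > 0, ∀ x ∈ I, x ≠ 0 → δ ≤ x := by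
    by_contra hc
    push_neg at hc
    have step : ∀ y : ℝ, 0 < y → ∃ x, x ∈ I ∧ 0 < x ∧ x < y := by
      intro y hy
      obtain ⟨x, hxI, hxne, hxlt⟩ := hc y hy
      exact ⟨x, hxI, lt_of_le_of_ne (hI0 hxI) (Ne.symm hxne), hxlt⟩
    obtain ⟨x0, hx0I, hx0pos, _⟩ := step 1 one_pos
    have next : ∀ p : {x : ℝ // x ∈ I ∧ 0 < x},
        ∃ q : {x : ℝ // x ∈ I ∧ 0 < x}, (q : ℝ) < p := by
      rintro ⟨x, hxI, hxpos⟩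
      obtain ⟨y, hyI, hypos, hylt⟩ := step x hxpos
      exact ⟨⟨y, hyI, hypos⟩, hylt⟩
    choose nf hnf using next
    let f : ℕ → {x : ℝ // x ∈ I ∧ 0 < x} :=
      fun n => Nat.rec ⟨x0, hx0I, hx0pos⟩ (fun _ p => nf p) n
    have hmem : ∀ n, (f n).1 ∈ I := fun n => (f n).2.1
    have hanti : StrictAnti (fun n => (f n).1) :=
      strictAnti_nat_of_succ_lt (fun n => hnf (f n))
    exact hI ⟨_, hanti, hmem⟩
  obtain ⟨δ, hδpos, hδlb⟩ := hδ
  set J : Set ℝ := I ∩ Set.Icc δ 1 with hJdef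
  have hJ01 : J ⊆ Set.Icc 0 1 :=
    fun x hx => ⟨le_trans hδpos.le hx.2.1, hx.2.2⟩
  have hJ2 : accPts (accPts J) = ∅ := by
    refine Set.eq_empty_of_subset_empty ?_
    have h1 : accPts J ⊆ accPts I := accPts_mono Set.inter_subset_left
    calc accPts (accPts J) ⊆ accPts (accPts I) := accPts_mono h1
      _ = ∅ := accPts_finite hfin
  set N : ℕ := ⌈1/δ⌉₊ with hN
  -- Step 2: every element of plusSet I lies in cumSums J N.
  have key : ∀ (l : ℕ) (g : Fin l → ℝ), (∀ p, g p ∈ I) → (∑ p, g p) ≤ 1 →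
      ∃ l' : ℕ, (l' : ℝ) * δ ≤ ∑ p, g p ∧ (∑ p, g p) ∈ cumSums J l' := by
    intro l
    induction l with
    | zero =>
      intro g _ _
      refine ⟨0, by simp, ?_⟩
      simp [cumSums]
    | succ n ih =>
      intro g hg hsum
      rw [Fin.sum_univ_succ] at hsum ⊢
      have hnn : ∀ p : Fin n, 0 ≤ g p.succ := fun p => hI0 (hg p.succ)
      have htnn : 0 ≤ ∑ p : Fin n, g p.succ := Finset.sum_nonneg fun p _ => hnn p
      have hg0nn : 0 ≤ g 0 := hI0 (hg 0)
      obtain ⟨l', hl'1, hl'2⟩ := ih (fun p => g p.succ) (fun p => hg p.succ)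
        (by linarith)
      by_cases h0 : g 0 = 0
      · exact ⟨l', by rw [h0, zero_add]; exact hl'1, by rw [h0, zero_add]; exact hl'2⟩
      · have hδle : δ ≤ g 0 := hδlb _ (hg 0) h0
        have hle1 : g 0 ≤ 1 := by linarith
        have hgJ : g 0 ∈ J := ⟨hg 0, hδle, hle1⟩
        refine ⟨l' + 1, ?_, ?_⟩
        · push_cast; linarith
        · have : (∑ p : Fin n, g p.succ) + g 0 ∈ cumSums J l' + J :=
            Set.add_mem_add hl'2 hgJ
          rw [cumSums]
          exact Or.inr (by rwa [add_comm (g 0)])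
  have hsub : plusSet I ⊆ cumSums J N := by
    rintro x (hx | ⟨⟨hx0, hx1⟩, l, hl, g, hg, rfl⟩)
    · rw [Set.mem_singleton_iff] at hx
      subst hx
      exact cumSums_mono J (Nat.zero_le N) (by simp [cumSums])
    · obtain ⟨l', h1, h2⟩ := key l g hg hx1
      refine cumSums_mono J ?_ h2
      have : (l' : ℝ) ≤ 1/δ := by
        rw [le_div_iff₀ hδpos]
        linarith
      exact_mod_cast Nat.cast_le.mp (this.trans (Nat.le_ceil _)) |>.trans le_rfl
  exact ⟨2*N+1, Set.eq_empty_of_subset_empty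
    ((iter_accPts_mono _ hsub).trans (cumSums_rank hJ01 hJ2 N).subset)⟩
end
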